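/- Let α : G ↷ A be an action of a discrete group G on a Banach algebra A with a contractive two-sided approximate unit, and let E be a Banach space. Suppose Ψ : ℓ¹(G, A) → B(E) is a contractive linear map satisfying Ψ(a*b) = Ψ(a)Ψ(b) for all a, b ∈ ℓ¹(G, A), which is non-degenerate in the sense that the linear span of { Ψ(a)ξ : a ∈ ℓ¹(G, A), ξ ∈ E } is dense in E. Then there exists a covariant representation (π, v) of α on E such that Ψ(a) = Σ_{g∈G} π(a(g)) v_g (norm-convergent series) for all a ∈ ℓ¹(G, A). -/

import Mathlib

set_option autoImplicit false
set_option maxHeartbeats 1000000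

open Filter Topology

/-- Disintegration for group actions: every non-degenerate contractive
multiplicative representation `Ψ` of `ℓ¹(G,A)` on a Banach space `E` is the integrated
form `Ψ(a) = ∑_g π(a g) v_g` of a covariant representation `(π, v)` of `α : G ↷ A`. -/
theorem group_action_disintegration
    {G A E : Type*} [Group G] [NonUnitalNormedRing A] [NormedSpace ℂ A]
    [NormedAddCommGroup E] [NormedSpace ℂ E] [CompleteSpace E]
    -- the action α : G ↷ A by isometric automorphisms
    (α : G → A → A)
    (hα_add : ∀ g (a b : A), α g (a + b) = α g a + α g b)
    (hα_smul : ∀ g (c : ℂ) (a : A), α g (c • a) = c • α g a)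
    (hα_mul : ∀ g (a b : A), α g (a * b) = α g a * α g b)
    (hα_norm : ∀ g (a : A), ‖α g a‖ = ‖a‖)
    (hα_one : ∀ a : A, α 1 a = a)
    (hα_hom : ∀ g h (a : A), α (g * h) a = α g (α h a))
    -- A has a contractive two-sided approximate unit
    (hA : ∃ l : Filter A, l.NeBot ∧ (∀ᶠ x in l, ‖x‖ ≤ 1) ∧
      ∀ a : A, Tendsto (fun x => x * a) l (𝓝 a) ∧ Tendsto (fun x => a * x) l (𝓝 a))
    -- Ψ : ℓ¹(G,A) → B(E) is a contractive linear multiplicative map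
    (Ψ : (G → A) → E →L[ℂ] E)
    (hΨ_add : ∀ a b : G → A, Summable (fun g => ‖a g‖) → Summable (fun g => ‖b g‖) →
      Ψ (a + b) = Ψ a + Ψ b)
    (hΨ_smul : ∀ (c : ℂ) (a : G → A), Summable (fun g => ‖a g‖) → Ψ (c • a) = c • Ψ a)
    (hΨ_norm : ∀ a : G → A, Summable (fun g => ‖a g‖) → ‖Ψ a‖ ≤ ∑' g, ‖a g‖)
    (hΨ_mul : ∀ a b : G → A, Summable (fun g => ‖a g‖) → Summable (fun g => ‖b g‖) →
      Ψ (fun g => ∑' h, a h * α h (b (h⁻¹ * g))) = Ψ a * Ψ b)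
    -- Ψ is non-degenerate
    (hΨ_nondeg : Dense (↑(Submodule.span ℂ
      {x : E | ∃ (a : G → A) (ξ : E), Summable (fun g => ‖a g‖) ∧ Ψ a ξ = x}) : Set E)) :
    -- then Ψ is the integrated form of a covariant representation (π, v) of α on E
    ∃ (π : A → E →L[ℂ] E) (v : G → E →L[ℂ] E),
      (∀ a, ‖π a‖ ≤ ‖a‖) ∧
      (∀ a b, π (a + b) = π a + π b) ∧
      (∀ (c : ℂ) (a : A), π (c • a) = c • π a) ∧
      (∀ a b, π (a * b) = π a * π b) ∧
      Dense (↑(Submodule.span ℂ {x : E | ∃ (a : A) (ξ : E), π a ξ = x}) : Set E) ∧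
      v 1 = 1 ∧
      (∀ g h, v (g * h) = v g * v h) ∧
      (∀ g (ξ : E), ‖v g ξ‖ = ‖ξ‖) ∧
      (∀ g (a : A), v g * π a = π (α g a) * v g) ∧
      ∀ a : G → A, Summable (fun g => ‖a g‖) →
        HasSum (fun g => π (a g) * v g) (Ψ a) := by
  classical
  obtain ⟨l, hlne, hbd, happ⟩ := hA
  haveI : l.NeBot := hlne
  -- the point masses δ g b and the translation operators W g
  set δ : G → A → G → A := fun g b h => if h = g then b else 0 with hδdef
  set W : G → (G → A) → G → A := fun g a h => α g (a (g⁻¹ * h)) with hWdef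
  have hδ_sum : ∀ (g : G) (b : A), Summable (fun h => ‖δ g b h‖) := by
    intro g b
    apply summable_of_ne_finset_zero (s := {g})
    intro h hh
    simp only [Finset.mem_singleton] at hh
    simp [hδdef, hh]
  have hδ_tsum : ∀ (g : G) (b : A), (∑' h, ‖δ g b h‖) = ‖b‖ := by
    intro g b
    have h1 : (fun h => ‖δ g b h‖) = fun h => if h = g then ‖b‖ else 0 := by
      funext h; by_cases h' : h = g <;> simp [hδdef, h']
    rw [h1, tsum_ite_eq]
  have hW_sum : ∀ (g : G) (a : G → A), Summable (fun h => ‖a h‖) →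
      Summable (fun h => ‖W g a h‖) := by
    intro g a ha
    have h1 : (fun h => ‖W g a h‖) = (fun h => ‖a h‖) ∘ (Equiv.mulLeft g⁻¹) := by
      funext h; simp [hWdef, hα_norm]
    rw [h1, Equiv.summable_iff]
    exact ha
  have hW_one : ∀ a : G → A, W 1 a = a := by
    intro a; funext x; simp [hWdef, hα_one]
  have hW_comp : ∀ (g h : G) (a : G → A), W g (W h a) = W (g * h) a := by
    intro g h a; funext x
    simp only [hWdef, hα_hom, mul_inv_rev, mul_assoc]
  have hmul_sum : ∀ (b : A) (a : G → A), Summable (fun x => ‖a x‖) →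
      Summable (fun x => ‖b * a x‖) :=
    fun b a ha => Summable.of_nonneg_of_le (fun _ => norm_nonneg _)
      (fun x => norm_mul_le b (a x)) (ha.mul_left ‖b‖)
  have hsub_sum : ∀ (a b : G → A), Summable (fun x => ‖a x‖) → Summable (fun x => ‖b x‖) →
      Summable (fun x => ‖a x - b x‖) :=
    fun a b ha hb => Summable.of_nonneg_of_le (fun _ => norm_nonneg _)
      (fun x => norm_sub_le _ _) (ha.add hb)
  have hΨ_zero : Ψ 0 = 0 := by
    have h0 : Summable (fun g : G => ‖(0 : G → A) g‖) := by simpa using summable_zero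
    have := hΨ_smul 0 0 h0
    simpa using this
  have hΨ_sub : ∀ a b : G → A, Summable (fun g => ‖a g‖) → Summable (fun g => ‖b g‖) →
      Ψ a - Ψ b = Ψ (a - b) := by
    intro a b ha hb
    have hab : Summable (fun g => ‖(a - b) g‖) := hsub_sum a b ha hb
    have h1 : (a - b) + b = a := by funext x; simp
    have h2 := hΨ_add (a - b) b hab hb
    rw [h1] at h2
    rw [h2]; abel
  -- convolution with a point mass
  have hconv : ∀ (g : G) (u : A) (a : G → A), Summable (fun x => ‖a x‖) →
      Ψ (δ g u) * Ψ a = Ψ (fun x => u * W g a x) := by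
    intro g u a ha
    rw [← hΨ_mul (δ g u) a (hδ_sum g u) ha]
    congr 1
    funext x
    rw [tsum_eq_single g]
    · simp [hδdef, hWdef]
    · intro h hh; simp [hδdef, hh]
  have hΨδ_norm : ∀ (g : G) (u : A), ‖Ψ (δ g u)‖ ≤ ‖u‖ := fun g u =>
    le_of_le_of_eq (hΨ_norm _ (hδ_sum g u)) (hδ_tsum g u)
  -- approximate-unit convergence in ℓ¹
  have hdom : ∀ b : G → A, Summable (fun x => ‖b x‖) →
      Tendsto (fun u => ∑' x, ‖u * b x - b x‖) l (𝓝 0) := by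
    intro b hb
    have key := tendsto_tsum_of_dominated_convergence
      (f := fun (u : A) (x : G) => ‖u * b x - b x‖) (g := fun _ => (0 : ℝ))
      (bound := fun x => 2 * ‖b x‖) (𝓕 := l) (hb.mul_left 2)
      (fun x => by
        have h1 := (happ (b x)).1
        have := tendsto_iff_norm_sub_tendsto_zero.mp h1
        simpa using this.norm.congr (fun u => (Real.norm_of_nonneg (norm_nonneg _)).symm) |>.norm)
      ?_
    · simpa using key
    · filter_upwards [hbd] with u hu x
      rw [Real.norm_of_nonneg (norm_nonneg _)]
      calc ‖u * b x - b x‖ ≤ ‖u * b x‖ + ‖b x‖ := norm_sub_le _ _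
        _ ≤ ‖u‖ * ‖b x‖ + ‖b x‖ := by gcongr; exact norm_mul_le _ _
        _ ≤ 1 * ‖b x‖ + ‖b x‖ := by gcongr
        _ = 2 * ‖b x‖ := by ring
  -- convergence on generators
  have hgen : ∀ (g : G) (a : G → A) (ξ : E), Summable (fun x => ‖a x‖) →
      Tendsto (fun u => Ψ (δ g u) (Ψ a ξ)) l (𝓝 (Ψ (W g a) ξ)) := by
    intro g a ξ ha
    have hWs := hW_sum g a ha
    rw [tendsto_iff_norm_sub_tendsto_zero]
    apply squeeze_zero (fun u => norm_nonneg _)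
      (g := fun u => (∑' x, ‖u * W g a x - W g a x‖) * ‖ξ‖)
    · intro u
      have hus : Summable (fun x => ‖u * W g a x‖) := hmul_sum u (W g a) hWs
      have hdiff : Summable (fun x => ‖u * W g a x - W g a x‖) :=
        hsub_sum _ _ hus hWs
      have h1 : Ψ (δ g u) (Ψ a ξ) = Ψ (fun x => u * W g a x) ξ := by
        rw [← ContinuousLinearMap.mul_apply, hconv g u a ha]
      rw [h1, ← ContinuousLinearMap.sub_apply]
      calc ‖(Ψ (fun x => u * W g a x) - Ψ (W g a)) ξ‖
          ≤ ‖Ψ (fun x => u * W g a x) - Ψ (W g a)‖ * ‖ξ‖ :=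
            ContinuousLinearMap.le_opNorm _ _
        _ ≤ (∑' x, ‖u * W g a x - W g a x‖) * ‖ξ‖ := by
            gcongr
            rw [hΨ_sub _ _ hus hWs]
            exact le_of_le_of_eq (hΨ_norm _ (by simpa using hdiff)) (by simp)
    · simpa using (hdom (W g a) hWs).mul_const ‖ξ‖
  -- the dense submodule of generators
  set genSet : Set E :=
    {x : E | ∃ (a : G → A) (ξ : E), Summable (fun g => ‖a g‖) ∧ Ψ a ξ = x} with hgenSet
  set D : Submodule ℂ E := Submodule.span ℂ genSet with hD
  have hkey : ∀ (g : G), ∀ x ∈ D, ∃ y, Tendsto (fun u => Ψ (δ g u) x) l (𝓝 y) := by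
    intro g x hx
    induction hx using Submodule.span_induction with
    | mem x hx =>
      obtain ⟨a, ξ, ha, rfl⟩ := hx
      exact ⟨_, hgen g a ξ ha⟩
    | zero => exact ⟨0, by simpa using (tendsto_const_nhds : Tendsto (fun _ : A => (0:E)) l _)⟩
    | add x y _ _ hx hy =>
      obtain ⟨yx, hxT⟩ := hx; obtain ⟨yy, hyT⟩ := hy
      exact ⟨yx + yy, by simpa [map_add] using hxT.add hyT⟩
    | smul c x _ hx =>
      obtain ⟨y, hT⟩ := hx
      exact ⟨c • y, by simpa [map_smul] using hT.const_smul c⟩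
  have hFlim : ∀ (g : G) (x : ↥D), Tendsto (fun u => Ψ (δ g u) (x : E)) l
      (𝓝 (limUnder l (fun u => Ψ (δ g u) (x : E)))) :=
    fun g x => tendsto_nhds_limUnder (hkey g x x.2)
  -- construct v g by extending from D
  let F : G → (↥D →ₗ[ℂ] E) := fun g =>
    { toFun := fun x => limUnder l (fun u => Ψ (δ g u) (x : E))
      map_add' := fun x y => by
        refine Tendsto.limUnder_eq ?_
        have := (hFlim g x).add (hFlim g y)
        simpa [map_add] using this
      map_smul' := fun c x => by
        refine Tendsto.limUnder_eq ?_
        have := (hFlim g x).const_smul c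
        simpa [map_smul] using this }
  have hFbound : ∀ (g : G) (x : ↥D), ‖F g x‖ ≤ 1 * ‖x‖ := by
    intro g x
    rw [one_mul]
    refine le_of_tendsto (hFlim g x).norm ?_
    filter_upwards [hbd] with u hu
    calc ‖Ψ (δ g u) (x : E)‖ ≤ ‖Ψ (δ g u)‖ * ‖(x : E)‖ := ContinuousLinearMap.le_opNorm _ _
      _ ≤ ‖u‖ * ‖(x : E)‖ := by gcongr; exact hΨδ_norm g u
      _ ≤ 1 * ‖(x : E)‖ := by gcongr
      _ = ‖x‖ := by rw [one_mul]; rfl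
  let Fc : G → (↥D →L[ℂ] E) := fun g => (F g).mkContinuous 1 (hFbound g)
  have hdense : DenseRange (D.subtypeL) := by
    have h1 : Set.range (D.subtypeL) = (D : Set E) := by
      ext x
      constructor
      · rintro ⟨y, rfl⟩; exact y.2
      · intro hx; exact ⟨⟨x, hx⟩, rfl⟩
    unfold DenseRange
    rw [h1]
    exact hΨ_nondeg
  have hui : IsUniformInducing (D.subtypeL) := isometry_subtype_coe.isUniformInducing
  let v : G → (E →L[ℂ] E) := fun g => (Fc g).extend D.subtypeL
  have hvD : ∀ (g : G) (x : E) (hx : x ∈ D),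
      Tendsto (fun u => Ψ (δ g u) x) l (𝓝 (v g x)) := by
    intro g x hx
    have h1 : v g x = Fc g ⟨x, hx⟩ := by
      have := ContinuousLinearMap.extend_eq (Fc g) hdense hui ⟨x, hx⟩
      simpa using this
    rw [h1]
    exact hFlim g ⟨x, hx⟩
  have hv_apply : ∀ (g : G) (a : G → A) (ξ : E), Summable (fun x => ‖a x‖) →
      v g (Ψ a ξ) = Ψ (W g a) ξ := by
    intro g a ξ ha
    have hx : Ψ a ξ ∈ D := Submodule.subset_span ⟨a, ξ, ha, rfl⟩
    exact tendsto_nhds_unique (hvD g _ hx) (hgen g a ξ ha)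
  have hv_le : ∀ (g : G) (x : E), ‖v g x‖ ≤ ‖x‖ := by
    intro g x
    have hsub : (D : Set E) ⊆ {y : E | ‖v g y‖ ≤ ‖y‖} := by
      intro y hy
      refine le_of_tendsto (hvD g y hy).norm ?_
      filter_upwards [hbd] with u hu
      calc ‖Ψ (δ g u) y‖ ≤ ‖Ψ (δ g u)‖ * ‖y‖ := ContinuousLinearMap.le_opNorm _ _
        _ ≤ ‖u‖ * ‖y‖ := by gcongr; exact hΨδ_norm g u
        _ ≤ 1 * ‖y‖ := by gcongr
        _ = ‖y‖ := one_mul _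
    have hcl : IsClosed {y : E | ‖v g y‖ ≤ ‖y‖} :=
      isClosed_le ((v g).continuous.norm) continuous_norm
    exact closure_minimal hsub hcl (hΨ_nondeg x)
  -- the representation π
  let π : A → (E →L[ℂ] E) := fun b => Ψ (δ 1 b)
  have hπ_apply : ∀ (b : A) (a : G → A) (ξ : E), Summable (fun x => ‖a x‖) →
      π b (Ψ a ξ) = Ψ (fun x => b * a x) ξ := by
    intro b a ξ ha
    have h1 : π b (Ψ a ξ) = (Ψ (δ 1 b) * Ψ a) ξ := rfl
    rw [h1, hconv 1 b a ha, hW_one]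
  have hπ_norm : ∀ b : A, ‖π b‖ ≤ ‖b‖ :=
    fun b => le_of_le_of_eq (hΨ_norm _ (hδ_sum 1 b)) (hδ_tsum 1 b)
  have hπ_add : ∀ b c : A, π (b + c) = π b + π c := by
    intro b c
    show Ψ (δ 1 (b + c)) = Ψ (δ 1 b) + Ψ (δ 1 c)
    rw [← hΨ_add _ _ (hδ_sum 1 b) (hδ_sum 1 c)]
    congr 1
    funext x; by_cases hx : x = 1 <;> simp [hδdef, hx]
  have hπ_smul : ∀ (c : ℂ) (b : A), π (c • b) = c • π b := by
    intro c b
    show Ψ (δ 1 (c • b)) = c • Ψ (δ 1 b)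
    rw [← hΨ_smul c _ (hδ_sum 1 b)]
    congr 1
    funext x; by_cases hx : x = 1 <;> simp [hδdef, hx]
  have hπ_mulp : ∀ b c : A, π (b * c) = π b * π c := by
    intro b c
    show Ψ (δ 1 (b * c)) = Ψ (δ 1 b) * Ψ (δ 1 c)
    rw [hconv 1 b (δ 1 c) (hδ_sum 1 c), hW_one]
    congr 1
    funext x; by_cases hx : x = 1 <;> simp [hδdef, hx]
  have hπΨ : ∀ b : A, π b = Ψ (δ 1 b) := fun _ => rfl
  -- v is multiplicative
  have hv_mul : ∀ g h : G, v (g * h) = v g * v h := by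
    intro g h
    apply ContinuousLinearMap.ext_on hΨ_nondeg
    rintro x ⟨a, ξ, ha, rfl⟩
    rw [ContinuousLinearMap.mul_apply, hv_apply h a ξ ha,
      hv_apply g (W h a) ξ (hW_sum h a ha), hv_apply (g * h) a ξ ha, hW_comp]
  have hv_one : v 1 = 1 := by
    apply ContinuousLinearMap.ext_on hΨ_nondeg
    rintro x ⟨a, ξ, ha, rfl⟩
    rw [hv_apply 1 a ξ ha, hW_one, ContinuousLinearMap.one_apply]
  have hv_isom : ∀ (g : G) (ξ : E), ‖v g ξ‖ = ‖ξ‖ := by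
    intro g ξ
    refine le_antisymm (hv_le g ξ) ?_
    have h1 : v g⁻¹ (v g ξ) = ξ := by
      rw [← ContinuousLinearMap.mul_apply, ← hv_mul, inv_mul_cancel, hv_one,
        ContinuousLinearMap.one_apply]
    calc ‖ξ‖ = ‖v g⁻¹ (v g ξ)‖ := by rw [h1]
      _ ≤ ‖v g ξ‖ := hv_le g⁻¹ _
  -- covariance
  have hcov : ∀ (g : G) (b : A), v g * π b = π (α g b) * v g := by
    intro g b
    apply ContinuousLinearMap.ext_on hΨ_nondeg
    rintro x ⟨a, ξ, ha, rfl⟩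
    have hba : Summable (fun x => ‖b * a x‖) := hmul_sum b a ha
    rw [ContinuousLinearMap.mul_apply, ContinuousLinearMap.mul_apply,
      hπ_apply b a ξ ha, hv_apply g (fun x => b * a x) ξ hba,
      hv_apply g a ξ ha, hπ_apply (α g b) (W g a) ξ (hW_sum g a ha)]
    have harg : (W g fun x => b * a x) = fun x => α g b * W g a x := by
      funext x; simp [hWdef, hα_mul]
    rw [harg]
  -- π b ∘ v g is Ψ of the point mass at g
  have hπv : ∀ (g : G) (b : A), π b * v g = Ψ (δ g b) := by
    intro g b
    apply ContinuousLinearMap.ext_on hΨ_nondeg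
    rintro x ⟨a, ξ, ha, rfl⟩
    have h2 : Ψ (δ g b) (Ψ a ξ) = Ψ (fun x => b * W g a x) ξ := by
      rw [← ContinuousLinearMap.mul_apply, hconv g b a ha]
    rw [ContinuousLinearMap.mul_apply, hv_apply g a ξ ha,
      hπ_apply b (W g a) ξ (hW_sum g a ha), h2]
  clear_value π v Fc F
  -- the integrated form
  have hHasSum : ∀ a : G → A, Summable (fun g => ‖a g‖) →
      HasSum (fun g => π (a g) * v g) (Ψ a) := by
    intro a ha
    have hfin : ∀ s : Finset G, ∑ g ∈ s, Ψ (δ g (a g)) =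
        Ψ (fun x => if x ∈ s then a x else 0) := by
      intro s
      induction s using Finset.induction_on with
      | empty => simp; exact hΨ_zero.symm
      | insert _ _ hg =>
        rename_i g s ih
        have hbs : Summable (fun x => ‖(fun x => if x ∈ s then a x else 0) x‖) := by
          apply Summable.of_nonneg_of_le (fun _ => norm_nonneg _) _ ha
          intro x; by_cases hx : x ∈ s <;> simp [hx]
        have heq : (fun x => if x ∈ insert g s then a x else 0) =
            δ g (a g) + (fun x => if x ∈ s then a x else 0) := by
          funext x
          by_cases hx : x = g
          · subst hx; simp [hδdef, hg]
          · by_cases hxs : x ∈ s <;> simp [hδdef, hx, hxs]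
        rw [Finset.sum_insert hg, ih, ← hΨ_add _ _ (hδ_sum g (a g)) hbs, ← heq]
    have htail : Tendsto (fun s : Finset G => ∑' x : {x // x ∉ s}, ‖a x‖) atTop (𝓝 0) :=
      tendsto_tsum_compl_atTop_zero (fun x => ‖a x‖)
    show Tendsto (fun s : Finset G => ∑ g ∈ s, (π (a g) * v g)) atTop (𝓝 (Ψ a))
    have hre : (fun s : Finset G => ∑ g ∈ s, (π (a g) * v g)) =
        fun s : Finset G => Ψ (fun x => if x ∈ s then a x else 0) := by
      funext s
      rw [← hfin]
      exact Finset.sum_congr rfl (fun g _ => hπv g (a g))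
    rw [hre, tendsto_iff_norm_sub_tendsto_zero]
    apply squeeze_zero (fun s => norm_nonneg _)
      (g := fun s : Finset G => ∑' x : {x // x ∉ s}, ‖a x‖)
    · intro s
      have hbs : Summable (fun x => ‖(fun x => if x ∈ s then a x else 0) x‖) := by
        apply Summable.of_nonneg_of_le (fun _ => norm_nonneg _) _ ha
        intro x; by_cases hx : x ∈ s <;> simp [hx]
      rw [hΨ_sub _ _ hbs ha]
      have hdiffsum : Summable
          (fun x => ‖((fun x => if x ∈ s then a x else 0) - a) x‖) := hsub_sum _ _ hbs ha
      refine le_of_le_of_eq (hΨ_norm _ hdiffsum) ?_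
      have h1 : (fun x => ‖((fun x => if x ∈ s then a x else 0) - a) x‖) =
          Set.indicator ((↑s : Set G))ᶜ (fun x => ‖a x‖) := by
        funext x
        by_cases hx : x ∈ s <;> simp [Set.indicator, hx]
      rw [h1, ← tsum_subtype]
      rfl
    · exact htail
  -- density of the range of π
  have hπ_dense : Dense (↑(Submodule.span ℂ
      {x : E | ∃ (b : A) (ξ : E), π b ξ = x}) : Set E) := by
    set P : Submodule ℂ E := Submodule.span ℂ {x : E | ∃ (b : A) (ξ : E), π b ξ = x} with hP
    have hgen_in : genSet ⊆ closure (P : Set E) := by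
      rintro x ⟨a, ξ, ha, rfl⟩
      have hs := hHasSum a ha
      have hs' : HasSum (fun g => (π (a g) * v g) ξ) (Ψ a ξ) := by
        have h := ContinuousLinearMap.hasSum (f := fun g => π (a g) * v g)
          (ContinuousLinearMap.apply ℂ E ξ) hs
        simpa using h
      refine mem_closure_of_tendsto hs' ?_
      filter_upwards with s
      apply Submodule.sum_mem
      intro g _
      exact Submodule.subset_span ⟨a g, v g ξ, rfl⟩
    have hDP : (D : Set E) ⊆ closure (P : Set E) := by
      have h1 : D ≤ P.topologicalClosure := Submodule.span_le.mpr hgen_in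
      exact h1
    intro x
    have hx : x ∈ closure (D : Set E) := hΨ_nondeg x
    exact closure_minimal hDP isClosed_closure hx
  exact ⟨π, v, hπ_norm, hπ_add, hπ_smul, hπ_mulp, hπ_dense, hv_one, hv_mul, hv_isom, hcov,
    hHasSum⟩
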